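/- Let n > 2 be real, θ1 > 0, λ ∈ ℝ, p = (n+2)/(n−2). Let u : [0,θ1] → ℝ be continuously differentiable on [0,θ1], twice differentiable on (0,θ1), with u ≥ 0, u(θ1) = 0, u'(0) = 0, and u''(θ) + (n−1)·coth(θ)·u'(θ) + λ·u(θ) + u(θ)^p = 0 on (0,θ1). Let g : [0,θ1] → ℝ be three times continuously differentiable with g(0) = g'(0) = 0. Define f(θ) = (1/2)·g'(θ)·sinh^{n−1}(θ), A(θ) = (1/2)·(d/dθ)(f'(θ)·sinh^{n−1}(θ)) + λ·f(θ)·sinh^{n−1}(θ) + (λ/2)·(d/dθ)(g(θ)·sinh^{2n−2}(θ)), and B(θ) = f(θ)·sinh^{n−1}(θ) + (1/(p+1))·(d/dθ)(g(θ)·sinh^{2n−2}(θ)). Then ∫_0^{θ1} A(θ)·u(θ)² dθ + ∫_0^{θ1} B(θ)·u(θ)^{p+1} dθ = (1/2)·sinh^{2n−2}(θ1)·u'(θ1)²·g(θ1). -/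

import Mathlib

open Real Set

noncomputable section

/-- The hyperbolic cotangent. -/
def Real.coth (x : ℝ) : ℝ := Real.cosh x / Real.sinh x

/-- The multiplier `f(θ) = (1/2) g'(θ) sinh^{n-1}(θ)` of the Pohozaev argument. -/
def fAux (n θ1 : ℝ) (g : ℝ → ℝ) : ℝ → ℝ :=
  fun θ => (1 / 2) * derivWithin g (Icc 0 θ1) θ * Real.sinh θ ^ (n - 1)

/-- The coefficient
`A(θ) = (1/2)(f' sinh^{n-1})'(θ) + λ f(θ) sinh^{n-1}(θ) + (λ/2)(g sinh^{2n-2})'(θ)`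
of the Pohozaev identity. -/
def AAux (n θ1 lam : ℝ) (g : ℝ → ℝ) : ℝ → ℝ :=
  fun θ =>
    (1 / 2) * derivWithin
        (fun t => derivWithin (fAux n θ1 g) (Icc 0 θ1) t * Real.sinh t ^ (n - 1))
        (Icc 0 θ1) θ
      + lam * fAux n θ1 g θ * Real.sinh θ ^ (n - 1)
      + (lam / 2) * derivWithin
          (fun t => g t * Real.sinh t ^ (2 * n - 2)) (Icc 0 θ1) θ

/-- The coefficient
`B(θ) = f(θ) sinh^{n-1}(θ) + (1/(p+1))(g sinh^{2n-2})'(θ)`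
of the Pohozaev identity. -/
def BAux (n θ1 p : ℝ) (g : ℝ → ℝ) : ℝ → ℝ :=
  fun θ =>
    fAux n θ1 g θ * Real.sinh θ ^ (n - 1)
      + (1 / (p + 1)) * derivWithin
          (fun t => g t * Real.sinh t ^ (2 * n - 2)) (Icc 0 θ1) θ

/-- `sP c θ = sinh θ ^ c` (real power). -/
def sP (c : ℝ) : ℝ → ℝ := fun θ => Real.sinh θ ^ c

lemma sP_cont {c : ℝ} (hc : 0 ≤ c) : Continuous (sP c) :=
  (Real.continuous_rpow_const hc).comp Real.continuous_sinh

lemma sP_zero {c : ℝ} (hc : c ≠ 0) : sP c 0 = 0 := by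
  simp [sP, Real.zero_rpow hc]

lemma sP_hasDerivAt {θ : ℝ} (hθ : 0 < θ) (c : ℝ) :
    HasDerivAt (sP c) (c * Real.cosh θ * sP (c - 1) θ) θ := by
  have hs : Real.sinh θ ≠ 0 := ne_of_gt (Real.sinh_pos_iff.2 hθ)
  have h2 := (Real.hasDerivAt_rpow_const (x := Real.sinh θ) (p := c)
    (Or.inl hs)).comp θ (Real.hasDerivAt_sinh θ)
  refine h2.congr_deriv (Eq.symm ?_)
  simp [sP]; ring

lemma sP_hasDerivWithinAt_zero {c : ℝ} (hc : 1 < c) {θ1 : ℝ} :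
    HasDerivWithinAt (sP c) 0 (Icc 0 θ1) 0 := by
  rw [hasDerivWithinAt_iff_tendsto_slope]
  have h1 : Filter.Tendsto (slope Real.sinh 0) (nhdsWithin 0 ((Icc 0 θ1) \ {0})) (nhds 1) := by
    have := hasDerivAt_iff_tendsto_slope.1 (Real.hasDerivAt_sinh 0)
    rw [Real.cosh_zero] at this
    exact this.mono_left (nhdsWithin_mono _ (by intro x hx; exact hx.2))
  have h2 : Filter.Tendsto (fun t => Real.sinh t ^ (c - 1))
      (nhdsWithin 0 ((Icc 0 θ1) \ {0})) (nhds 0) := by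
    have hcont : ContinuousAt (fun t => Real.sinh t ^ (c - 1)) 0 :=
      ((Real.continuous_rpow_const (by linarith)).comp Real.continuous_sinh).continuousAt
    have := hcont.tendsto
    rw [Real.sinh_zero, Real.zero_rpow (by linarith : c - 1 ≠ 0)] at this
    exact this.mono_left nhdsWithin_le_nhds
  have key := h1.mul h2
  rw [one_mul] at key
  apply key.congr'
  filter_upwards [self_mem_nhdsWithin] with t ht
  have ht0 : 0 < t := lt_of_le_of_ne ht.1.1 (Ne.symm (by simpa using ht.2))
  have hspos : 0 < Real.sinh t := Real.sinh_pos_iff.2 ht0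
  simp only [slope, Real.sinh_zero, sP, sub_zero, vsub_eq_sub]
  rw [Real.zero_rpow (by linarith : c ≠ 0), sub_zero, smul_eq_mul, smul_eq_mul,
    mul_assoc, ← Real.rpow_one_add' (le_of_lt hspos) (by linarith)]
  ring_nf

lemma sP_hasDerivWithinAt {c θ1 : ℝ} (hc : 1 < c) {θ : ℝ} (hθ : θ ∈ Icc 0 θ1) :
    HasDerivWithinAt (sP c) (c * Real.cosh θ * sP (c - 1) θ) (Icc 0 θ1) θ := by
  rcases eq_or_lt_of_le hθ.1 with h | h
  · rw [← h]
    have h0 : c * Real.cosh 0 * sP (c - 1) 0 = 0 := by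
      rw [sP_zero (by linarith : c - 1 ≠ 0)]; ring
    rw [h0]
    exact sP_hasDerivWithinAt_zero hc
  · exact (sP_hasDerivAt h c).hasDerivWithinAt

/-- The explicit form of `(f' sinh^{n-1})'`. -/
def PhiAux (n : ℝ) (g1 g2 g3 : ℝ → ℝ) : ℝ → ℝ := fun θ =>
  1/2 * g3 θ * sP (2*n-2) θ + 1/2 * g2 θ * ((2*n-2) * Real.cosh θ * sP (2*n-3) θ)
  + (n-1)/2 * (g2 θ * (Real.cosh θ * sP (2*n-3) θ)
      + g1 θ * (Real.sinh θ * sP (2*n-3) θ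
        + Real.cosh θ * ((2*n-3) * Real.cosh θ * sP (2*n-4) θ)))

/-- The explicit form of `(g sinh^{2n-2})'`. -/
def PsiAux (n : ℝ) (g g1 : ℝ → ℝ) : ℝ → ℝ := fun θ =>
  g1 θ * sP (2*n-2) θ + g θ * ((2*n-2) * Real.cosh θ * sP (2*n-3) θ)

/-- The primitive in the Pohozaev identity. -/
def HAux (n lam p : ℝ) (g g1 g2 u u' : ℝ → ℝ) : ℝ → ℝ := fun θ =>
  1/2 * g θ * sP (2*n-2) θ * u' θ ^ 2
  + lam/2 * g θ * sP (2*n-2) θ * u θ ^ 2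
  + 1/(p+1) * g θ * sP (2*n-2) θ * u θ ^ (p+1)
  - 1/2 * g1 θ * sP (2*n-2) θ * (u θ * u' θ)
  + 1/4 * g2 θ * sP (2*n-2) θ * u θ ^ 2
  + (n-1)/4 * g1 θ * Real.cosh θ * sP (2*n-3) θ * u θ ^ 2

/-- The derivative computation for the primitive, at interior points. -/
lemma HAux_hasDerivAt (n lam p : ℝ) (hn : 2 < n) (hp0 : 0 < p)
    (g g1 g2 g3 u u' u'' : ℝ → ℝ) (θ : ℝ) (hθ : 0 < θ)
    (hgd : HasDerivAt g (g1 θ) θ) (hg1d : HasDerivAt g1 (g2 θ) θ)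
    (hg2d : HasDerivAt g2 (g3 θ) θ)
    (hud : HasDerivAt u (u' θ) θ) (hu'd : HasDerivAt u' (u'' θ) θ)
    (hupos : 0 ≤ u θ)
    (hode : u'' θ + (n - 1) * Real.coth θ * u' θ + lam * u θ + u θ ^ p = 0) :
    HasDerivAt (HAux n lam p g g1 g2 u u')
      ((1/2 * PhiAux n g1 g2 g3 θ + lam * (1/2 * g1 θ * sP (2*n-2) θ)
          + lam/2 * PsiAux n g g1 θ) * u θ ^ 2
        + (1/2 * g1 θ * sP (2*n-2) θ + 1/(p+1) * PsiAux n g g1 θ) * u θ ^ (p+1)) θ := by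
  have hp1ne : p + 1 ≠ 0 := by positivity
  have hshpos : 0 < Real.sinh θ := Real.sinh_pos_iff.2 hθ
  have hshne : Real.sinh θ ≠ 0 := ne_of_gt hshpos
  have hP2 : HasDerivAt (sP (2*n-2)) ((2*n-2) * Real.cosh θ * sP (2*n-3) θ) θ := by
    have h := sP_hasDerivAt hθ (2*n-2)
    rwa [show 2*n-2-1 = 2*n-3 by ring] at h
  have hQ : HasDerivAt (sP (2*n-3)) ((2*n-3) * Real.cosh θ * sP (2*n-4) θ) θ := by
    have h := sP_hasDerivAt hθ (2*n-3)
    rwa [show 2*n-3-1 = 2*n-4 by ring] at h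
  have hcosh : HasDerivAt Real.cosh (Real.sinh θ) θ := Real.hasDerivAt_cosh θ
  have hup1 : HasDerivAt (fun t => u t ^ (p+1)) ((p+1) * u θ ^ p * u' θ) θ := by
    have h := (Real.hasDerivAt_rpow_const (x := u θ) (p := p+1)
      (Or.inr (by linarith))).comp θ hud
    refine h.congr_deriv (Eq.symm ?_)
    rw [show p+1-1 = p by ring]
  have hshode : Real.sinh θ * u'' θ + (n-1) * Real.cosh θ * u' θ
      + Real.sinh θ * (lam * u θ) + Real.sinh θ * u θ ^ p = 0 := by
    have h2 : Real.sinh θ * (u'' θ + (n - 1) * Real.coth θ * u' θ + lam * u θ + u θ ^ p)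
        = 0 := by rw [hode]; ring
    simp only [Real.coth] at h2
    field_simp at h2
    linear_combination h2
  -- the six pieces
  have t1 : HasDerivAt (fun t => 1/2 * g t * sP (2*n-2) t * u' t ^ 2)
      (1/2 * g1 θ * sP (2*n-2) θ * u' θ ^ 2
        + (n-1) * g θ * Real.cosh θ * sP (2*n-3) θ * u' θ ^ 2
        + g θ * sP (2*n-2) θ * (u' θ * u'' θ)) θ := by
    have h := (((hgd.const_mul (1/2:ℝ)).mul hP2).mul (hu'd.pow 2))
    refine h.congr_deriv (Eq.symm ?_)
    simp only [Pi.mul_apply, Pi.pow_apply]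
    push_cast
    ring
  have t2 : HasDerivAt (fun t => lam/2 * g t * sP (2*n-2) t * u t ^ 2)
      (lam/2 * g1 θ * sP (2*n-2) θ * u θ ^ 2
        + lam * (n-1) * g θ * Real.cosh θ * sP (2*n-3) θ * u θ ^ 2
        + lam * g θ * sP (2*n-2) θ * (u θ * u' θ)) θ := by
    have h := (((hgd.const_mul (lam/2:ℝ)).mul hP2).mul (hud.pow 2))
    refine h.congr_deriv (Eq.symm ?_)
    simp only [Pi.mul_apply, Pi.pow_apply]
    push_cast
    ring
  have t3 : HasDerivAt (fun t => 1/(p+1) * g t * sP (2*n-2) t * u t ^ (p+1))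
      (1/(p+1) * g1 θ * sP (2*n-2) θ * u θ ^ (p+1)
        + (2*n-2)/(p+1) * g θ * Real.cosh θ * sP (2*n-3) θ * u θ ^ (p+1)
        + g θ * sP (2*n-2) θ * (u θ ^ p * u' θ)) θ := by
    have h := (((hgd.const_mul (1/(p+1):ℝ))).mul hP2).mul hup1
    refine h.congr_deriv (Eq.symm ?_)
    simp only [Pi.mul_apply, Pi.pow_apply]
    field_simp
  have t4 : HasDerivAt (fun t => 1/2 * g1 t * sP (2*n-2) t * (u t * u' t))
      (1/2 * g2 θ * sP (2*n-2) θ * (u θ * u' θ)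
        + (n-1) * g1 θ * Real.cosh θ * sP (2*n-3) θ * (u θ * u' θ)
        + 1/2 * g1 θ * sP (2*n-2) θ * (u' θ * u' θ + u θ * u'' θ)) θ := by
    have h := (((hg1d.const_mul (1/2:ℝ)).mul hP2).mul (hud.mul hu'd))
    refine h.congr_deriv (Eq.symm ?_)
    simp only [Pi.mul_apply, Pi.pow_apply]
    ring
  have t5 : HasDerivAt (fun t => 1/4 * g2 t * sP (2*n-2) t * u t ^ 2)
      (1/4 * g3 θ * sP (2*n-2) θ * u θ ^ 2
        + (n-1)/2 * g2 θ * Real.cosh θ * sP (2*n-3) θ * u θ ^ 2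
        + 1/2 * g2 θ * sP (2*n-2) θ * (u θ * u' θ)) θ := by
    have h := (((hg2d.const_mul (1/4:ℝ)).mul hP2).mul (hud.pow 2))
    refine h.congr_deriv (Eq.symm ?_)
    simp only [Pi.mul_apply, Pi.pow_apply]
    push_cast
    ring
  have t6 : HasDerivAt (fun t => (n-1)/4 * g1 t * Real.cosh t * sP (2*n-3) t * u t ^ 2)
      ((n-1)/4 * (g2 θ * Real.cosh θ * sP (2*n-3) θ
          + g1 θ * Real.sinh θ * sP (2*n-3) θ
          + g1 θ * Real.cosh θ * ((2*n-3) * Real.cosh θ * sP (2*n-4) θ)) * u θ ^ 2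
        + (n-1)/2 * g1 θ * Real.cosh θ * sP (2*n-3) θ * (u θ * u' θ)) θ := by
    have h := ((((hg1d.const_mul ((n-1)/4:ℝ)).mul hcosh).mul hQ).mul (hud.pow 2))
    refine h.congr_deriv (Eq.symm ?_)
    simp only [Pi.mul_apply, Pi.pow_apply]
    push_cast
    ring
  have total := ((((t1.add t2).add t3).sub t4).add t5).add t6
  have hfun : HAux n lam p g g1 g2 u u' = fun t =>
      1/2 * g t * sP (2*n-2) t * u' t ^ 2
      + lam/2 * g t * sP (2*n-2) t * u t ^ 2
      + 1/(p+1) * g t * sP (2*n-2) t * u t ^ (p+1)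
      - 1/2 * g1 t * sP (2*n-2) t * (u t * u' t)
      + 1/4 * g2 t * sP (2*n-2) t * u t ^ 2
      + (n-1)/4 * g1 t * Real.cosh t * sP (2*n-3) t * u t ^ 2 := rfl
  rw [hfun]
  refine total.congr_deriv (Eq.symm ?_)
  have hP2Q : sP (2*n-2) θ = Real.sinh θ * sP (2*n-3) θ := by
    simp only [sP]
    rw [show 2*n-2 = 1 + (2*n-3) by ring,
      Real.rpow_add' (le_of_lt hshpos) (by linarith), Real.rpow_one]
  have hupp : u θ ^ (p+1) = u θ ^ p * u θ := by
    rw [Real.rpow_add' hupos (by linarith), Real.rpow_one]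
  simp only [PhiAux, PsiAux]
  rw [hP2Q, hupp]
  linear_combination (1/2 * g1 θ * u θ * sP (2*n-3) θ
    - g θ * sP (2*n-3) θ * u' θ) * hshode


/-- Equation (4.5): the Pohozaev-type identity for nonnegative radial solutions
of the Brezis–Nirenberg equation on hyperbolic space, with a `C³` multiplier
`g` satisfying `g(0) = g'(0) = 0`. -/
theorem pohozaev_identity (n θ1 lam p : ℝ)
    (hn : 2 < n) (hθ1 : 0 < θ1) (hp : p = (n + 2) / (n - 2))
    (u u' u'' : ℝ → ℝ)
    (hu : ∀ θ ∈ Icc (0:ℝ) θ1, HasDerivWithinAt u (u' θ) (Icc 0 θ1) θ)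
    (hu'cont : ContinuousOn u' (Icc 0 θ1))
    (hu'' : ∀ θ ∈ Ioo (0:ℝ) θ1, HasDerivAt u' (u'' θ) θ)
    (hupos : ∀ θ ∈ Icc (0:ℝ) θ1, 0 ≤ u θ)
    (huθ1 : u θ1 = 0) (hu'0 : u' 0 = 0)
    (hode : ∀ θ ∈ Ioo (0:ℝ) θ1,
      u'' θ + (n - 1) * Real.coth θ * u' θ + lam * u θ + u θ ^ p = 0)
    (g : ℝ → ℝ) (hg : ContDiffOn ℝ 3 g (Icc 0 θ1))
    (hg0 : g 0 = 0) (hg'0 : derivWithin g (Icc 0 θ1) 0 = 0) :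
    (∫ θ in (0:ℝ)..θ1, AAux n θ1 lam g θ * (u θ) ^ 2)
      + (∫ θ in (0:ℝ)..θ1, BAux n θ1 p g θ * u θ ^ (p + 1))
      = (1 / 2) * Real.sinh θ1 ^ (2 * n - 2) * (u' θ1) ^ 2 * g θ1 := by
  have hI : UniqueDiffOn ℝ (Icc (0:ℝ) θ1) := uniqueDiffOn_Icc hθ1
  have hp0 : 0 < p := by rw [hp]; apply div_pos <;> linarith
  have hp1ne : p + 1 ≠ 0 := by positivity
  set g1 := derivWithin g (Icc (0:ℝ) θ1) with hg1def
  set g2 := derivWithin g1 (Icc (0:ℝ) θ1) with hg2def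
  set g3 := derivWithin g2 (Icc (0:ℝ) θ1) with hg3def
  have hgC1 : ContDiffOn ℝ 2 g1 (Icc 0 θ1) := hg.derivWithin hI (by norm_num)
  have hgC2 : ContDiffOn ℝ 1 g2 (Icc 0 θ1) := hgC1.derivWithin hI (by norm_num)
  have hg3cont : ContinuousOn g3 (Icc 0 θ1) :=
    (hgC2.derivWithin (m := 0) hI (by norm_num)).continuousOn
  have hgcont : ContinuousOn g (Icc 0 θ1) := hg.continuousOn
  have hg1cont : ContinuousOn g1 (Icc 0 θ1) := hgC1.continuousOn
  have hg2cont : ContinuousOn g2 (Icc 0 θ1) := hgC2.continuousOn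
  have hgd : ∀ θ ∈ Icc (0:ℝ) θ1, HasDerivWithinAt g (g1 θ) (Icc 0 θ1) θ :=
    fun θ hθ => ((hg.differentiableOn (by norm_num)) θ hθ).hasDerivWithinAt
  have hg1d : ∀ θ ∈ Icc (0:ℝ) θ1, HasDerivWithinAt g1 (g2 θ) (Icc 0 θ1) θ :=
    fun θ hθ => ((hgC1.differentiableOn (by norm_num)) θ hθ).hasDerivWithinAt
  have hg2d : ∀ θ ∈ Icc (0:ℝ) θ1, HasDerivWithinAt g2 (g3 θ) (Icc 0 θ1) θ :=
    fun θ hθ => ((hgC2.differentiableOn (by norm_num)) θ hθ).hasDerivWithinAt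
  have hucont : ContinuousOn u (Icc 0 θ1) := fun θ hθ => (hu θ hθ).continuousWithinAt
  -- derivative of fAux
  have hfd : ∀ θ ∈ Icc (0:ℝ) θ1, HasDerivWithinAt (fAux n θ1 g)
      (1/2 * g2 θ * sP (n-1) θ + 1/2 * g1 θ * ((n-1) * Real.cosh θ * sP (n-2) θ))
      (Icc 0 θ1) θ := by
    intro θ hθ
    have h := ((hg1d θ hθ).const_mul (1/2:ℝ)).mul (sP_hasDerivWithinAt (c := n-1) (by linarith) hθ)
    rw [show n-1-1 = n-2 by ring] at h
    exact h
  have hf1val : ∀ θ ∈ Icc (0:ℝ) θ1, derivWithin (fAux n θ1 g) (Icc 0 θ1) θ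
      = 1/2 * g2 θ * sP (n-1) θ + 1/2 * g1 θ * ((n-1) * Real.cosh θ * sP (n-2) θ) :=
    fun θ hθ => (hfd θ hθ).derivWithin (hI θ hθ)
  have hFG : Set.EqOn
      (fun t => derivWithin (fAux n θ1 g) (Icc 0 θ1) t * Real.sinh t ^ (n - 1))
      (fun t => 1/2 * g2 t * sP (2*n-2) t
        + (n-1)/2 * (g1 t * (Real.cosh t * sP (2*n-3) t))) (Icc 0 θ1) := by
    intro θ hθ
    have hsn : (0:ℝ) ≤ Real.sinh θ := Real.sinh_nonneg_iff.2 hθ.1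
    have e1 : sP (n-1) θ * sP (n-1) θ = sP (2*n-2) θ := by
      simp only [sP]
      rw [show (2*n-2 : ℝ) = (n-1) + (n-1) by ring,
        Real.rpow_add' hsn (by linarith)]
    have e2 : sP (n-2) θ * sP (n-1) θ = sP (2*n-3) θ := by
      simp only [sP]
      rw [show (2*n-3 : ℝ) = (n-2) + (n-1) by ring,
        Real.rpow_add' hsn (by linarith)]
    simp only
    rw [hf1val θ hθ]
    show (1/2 * g2 θ * sP (n-1) θ + 1/2 * g1 θ * ((n-1) * Real.cosh θ * sP (n-2) θ))
        * sP (n-1) θ = _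
    linear_combination (1/2 * g2 θ) * e1 + ((n-1)/2 * g1 θ * Real.cosh θ) * e2
  have hGd : ∀ θ ∈ Icc (0:ℝ) θ1, HasDerivWithinAt
      (fun t => 1/2 * g2 t * sP (2*n-2) t
        + (n-1)/2 * (g1 t * (Real.cosh t * sP (2*n-3) t)))
      (PhiAux n g1 g2 g3 θ) (Icc 0 θ1) θ := by
    intro θ hθ
    have h1 := ((hg2d θ hθ).const_mul (1/2:ℝ)).mul (sP_hasDerivWithinAt (c := 2*n-2) (by linarith) hθ)
    have h2 := ((Real.hasDerivAt_cosh θ).hasDerivWithinAt).mul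
      (sP_hasDerivWithinAt (c := 2*n-3) (by linarith) hθ)
    have h3 := (((hg1d θ hθ).mul h2).const_mul ((n-1)/2 : ℝ))
    have h := h1.add h3
    rw [show 2*n-2-1 = 2*n-3 by ring, show 2*n-3-1 = 2*n-4 by ring] at h
    refine h.congr_deriv (Eq.symm ?_)
    simp only [Pi.mul_apply, Pi.pow_apply]
    all_goals simp only [PhiAux]
  have hPhival : ∀ θ ∈ Icc (0:ℝ) θ1, derivWithin
      (fun t => derivWithin (fAux n θ1 g) (Icc 0 θ1) t * Real.sinh t ^ (n - 1))
      (Icc 0 θ1) θ = PhiAux n g1 g2 g3 θ := by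
    intro θ hθ
    rw [derivWithin_congr hFG (hFG hθ)]
    exact (hGd θ hθ).derivWithin (hI θ hθ)
  have hGSd : ∀ θ ∈ Icc (0:ℝ) θ1, HasDerivWithinAt
      (fun t => g t * Real.sinh t ^ (2*n-2)) (PsiAux n g g1 θ) (Icc 0 θ1) θ := by
    intro θ hθ
    have h := (hgd θ hθ).mul (sP_hasDerivWithinAt (c := 2*n-2) (by linarith) hθ)
    rw [show 2*n-2-1 = 2*n-3 by ring] at h
    exact h
  have hPsival : ∀ θ ∈ Icc (0:ℝ) θ1, derivWithin
      (fun t => g t * Real.sinh t ^ (2*n-2)) (Icc 0 θ1) θ = PsiAux n g g1 θ :=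
    fun θ hθ => (hGSd θ hθ).derivWithin (hI θ hθ)
  -- identification of AAux and BAux
  have hAeq : ∀ θ ∈ Icc (0:ℝ) θ1, AAux n θ1 lam g θ
      = 1/2 * PhiAux n g1 g2 g3 θ + lam * (1/2 * g1 θ * sP (2*n-2) θ)
        + lam/2 * PsiAux n g g1 θ := by
    intro θ hθ
    have hsn : (0:ℝ) ≤ Real.sinh θ := Real.sinh_nonneg_iff.2 hθ.1
    have e1 : sP (n-1) θ * sP (n-1) θ = sP (2*n-2) θ := by
      simp only [sP]
      rw [show (2*n-2 : ℝ) = (n-1) + (n-1) by ring,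
        Real.rpow_add' hsn (by linarith)]
    simp only [AAux]
    rw [hPhival θ hθ, hPsival θ hθ]
    simp only [fAux, ← hg1def]
    show 1/2 * PhiAux n g1 g2 g3 θ + lam * (1/2 * g1 θ * sP (n-1) θ) * sP (n-1) θ
      + lam/2 * PsiAux n g g1 θ = _
    linear_combination (lam * 1/2 * g1 θ) * e1
  have hBeq : ∀ θ ∈ Icc (0:ℝ) θ1, BAux n θ1 p g θ
      = 1/2 * g1 θ * sP (2*n-2) θ + 1/(p+1) * PsiAux n g g1 θ := by
    intro θ hθ
    have hsn : (0:ℝ) ≤ Real.sinh θ := Real.sinh_nonneg_iff.2 hθ.1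
    have e1 : sP (n-1) θ * sP (n-1) θ = sP (2*n-2) θ := by
      simp only [sP]
      rw [show (2*n-2 : ℝ) = (n-1) + (n-1) by ring,
        Real.rpow_add' hsn (by linarith)]
    simp only [BAux]
    rw [hPsival θ hθ]
    simp only [fAux, ← hg1def]
    show (1/2 * g1 θ * sP (n-1) θ) * sP (n-1) θ + 1/(p+1) * PsiAux n g g1 θ = _
    linear_combination (1/2 * g1 θ) * e1
  -- continuity of everything in sight
  have hsP2c : Continuous (sP (2*n-2)) := sP_cont (by linarith)
  have hsQc : Continuous (sP (2*n-3)) := sP_cont (by linarith)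
  have hsRc : Continuous (sP (2*n-4)) := sP_cont (by linarith)
  have hup1cont : ContinuousOn (fun θ => u θ ^ (p+1)) (Icc (0:ℝ) θ1) :=
    (Real.continuous_rpow_const (by linarith)).comp_continuousOn hucont
  have hPhicont : ContinuousOn (PhiAux n g1 g2 g3) (Icc (0:ℝ) θ1) := by
    unfold PhiAux
    fun_prop
  have hPsicont : ContinuousOn (PsiAux n g g1) (Icc (0:ℝ) θ1) := by
    unfold PsiAux
    fun_prop
  have hAcont : ContinuousOn (fun θ => AAux n θ1 lam g θ * u θ ^ 2) (Icc (0:ℝ) θ1) := by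
    have hc : ContinuousOn (fun θ => (1/2 * PhiAux n g1 g2 g3 θ
        + lam * (1/2 * g1 θ * sP (2*n-2) θ) + lam/2 * PsiAux n g g1 θ) * u θ ^ 2)
        (Icc (0:ℝ) θ1) := by fun_prop
    exact hc.congr (fun θ hθ => by rw [hAeq θ hθ])
  have hBcont : ContinuousOn (fun θ => BAux n θ1 p g θ * u θ ^ (p+1)) (Icc (0:ℝ) θ1) := by
    have hc : ContinuousOn (fun θ => (1/2 * g1 θ * sP (2*n-2) θ
        + 1/(p+1) * PsiAux n g g1 θ) * u θ ^ (p+1)) (Icc (0:ℝ) θ1) := by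
      apply ContinuousOn.mul _ hup1cont
      fun_prop
    exact hc.congr (fun θ hθ => by rw [hBeq θ hθ])
  have hAint : IntervalIntegrable (fun θ => AAux n θ1 lam g θ * u θ ^ 2)
      MeasureTheory.volume 0 θ1 :=
    ContinuousOn.intervalIntegrable (by rwa [uIcc_of_le hθ1.le])
  have hBint : IntervalIntegrable (fun θ => BAux n θ1 p g θ * u θ ^ (p+1))
      MeasureTheory.volume 0 θ1 :=
    ContinuousOn.intervalIntegrable (by rwa [uIcc_of_le hθ1.le])
  have hHcont : ContinuousOn (HAux n lam p g g1 g2 u u') (Icc (0:ℝ) θ1) := by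
    unfold HAux
    apply ContinuousOn.add
    apply ContinuousOn.add
    apply ContinuousOn.sub
    apply ContinuousOn.add
    apply ContinuousOn.add
    · fun_prop
    · fun_prop
    · exact (((continuousOn_const.mul hgcont).mul hsP2c.continuousOn).mul hup1cont)
    · fun_prop
    · fun_prop
    · fun_prop
  have hkey : ∀ x ∈ Ioo (0:ℝ) θ1, HasDerivAt (HAux n lam p g g1 g2 u u')
      (AAux n θ1 lam g x * u x ^ 2 + BAux n θ1 p g x * u x ^ (p+1)) x := by
    intro x hx
    have hxI : x ∈ Icc (0:ℝ) θ1 := ⟨hx.1.le, hx.2.le⟩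
    have hnhds : Icc (0:ℝ) θ1 ∈ nhds x := Icc_mem_nhds hx.1 hx.2
    rw [hAeq x hxI, hBeq x hxI]
    exact HAux_hasDerivAt n lam p hn hp0 g g1 g2 g3 u u' u'' x hx.1
      ((hgd x hxI).hasDerivAt hnhds) ((hg1d x hxI).hasDerivAt hnhds)
      ((hg2d x hxI).hasDerivAt hnhds) ((hu x hxI).hasDerivAt hnhds)
      (hu'' x hx) (hupos x hxI) (hode x hx)
  have hFTC : (∫ θ in (0:ℝ)..θ1,      (AAux n θ1 lam g θ * u θ ^ 2 + BAux n θ1 p g θ * u θ ^ (p+1)))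
      = HAux n lam p g g1 g2 u u' θ1 - HAux n lam p g g1 g2 u u' 0 :=
    intervalIntegral.integral_eq_sub_of_hasDeriv_right_of_le hθ1.le hHcont
      (fun x hx => (hkey x hx).hasDerivWithinAt) (hAint.add hBint)
  rw [← intervalIntegral.integral_add hAint hBint]
  show (∫ θ in (0:ℝ)..θ1,      (AAux n θ1 lam g θ * u θ ^ 2 + BAux n θ1 p g θ * u θ ^ (p+1))) = _
  rw [hFTC]
  have h2n2 : sP (2*n-2) 0 = 0 := sP_zero (by intro h; nlinarith)
  have h2n3 : sP (2*n-3) 0 = 0 := sP_zero (by intro h; nlinarith)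
  have hH0 : HAux n lam p g g1 g2 u u' 0 = 0 := by
    simp only [HAux, hg0, hg'0, h2n2, h2n3]
    ring
  have hHθ1 : HAux n lam p g g1 g2 u u' θ1
      = 1/2 * g θ1 * sP (2*n-2) θ1 * u' θ1 ^ 2 := by
    simp only [HAux, huθ1, Real.zero_rpow hp1ne]
    ring
  rw [hH0, hHθ1]
  simp only [sP]
  ring
end
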